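/- (Theorem 5(a)) Let 0 < h < √2/2. Then there is no cylinder circumscribed to the five vertices of the trigonal bipyramid BP: there exist no unit vector u ∈ ℝ³, point c ∈ ℝ³, and ρ ≥ 0 with ‖pᵢ − c‖² − ⟨pᵢ − c, u⟩² = ρ² for all i = 1,…,5. -/

import Mathlib

set_option maxHeartbeats 800000


/-- The five vertices of the trigonal bipyramid `BP` of interapex half-height `h`. -/
noncomputable def bp (h : ℝ) : Fin 5 → EuclideanSpace ℝ (Fin 3) := fun i =>
  (WithLp.equiv 2 (Fin 3 → ℝ)).symm
    (![![0, 0, h], ![0, 0, -h], ![1, 0, 0], ![-(1/2), Real.sqrt 3 / 2, 0],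
       ![-(1/2), -(Real.sqrt 3 / 2), 0]] i)

/-- Theorem 5(a): for `0 < h < √2/2` there is no cylinder circumscribed to the five
vertices of the trigonal bipyramid `BP`. -/
theorem bipyramid_no_circumscribed_cylinder (h : ℝ) (h0 : 0 < h)
    (hh : h < Real.sqrt 2 / 2) :
    ¬ ∃ (u c : EuclideanSpace ℝ (Fin 3)) (ρ : ℝ), ‖u‖ = 1 ∧ 0 ≤ ρ ∧
        ∀ i : Fin 5, ‖bp h i - c‖ ^ 2 - (inner ℝ (bp h i - c) u : ℝ) ^ 2 = ρ ^ 2 := by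
  rintro ⟨u, c, ρ, hu, hρ, he⟩
  have hinner : ∀ x y : EuclideanSpace ℝ (Fin 3),
      (inner ℝ x y : ℝ) = x 0 * y 0 + x 1 * y 1 + x 2 * y 2 := by
    intro x y; simp [PiLp.inner_apply, Fin.sum_univ_three]; ring
  have hnorm : ∀ x : EuclideanSpace ℝ (Fin 3), ‖x‖^2 = x 0^2 + x 1^2 + x 2^2 := by
    intro x; rw [← real_inner_self_eq_norm_sq, hinner]; ring
  set t := Real.sqrt 3 with ht
  have t3 : t^2 = 3 := Real.sq_sqrt (by norm_num)
  have tpos : 0 < t := Real.sqrt_pos.mpr (by norm_num)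
  have hu2 : u 0^2 + u 1^2 + u 2^2 = 1 := by
    have := hnorm u; rw [hu] at this; linarith
  have e1 := he 0
  have e2 := he 1
  have e3 := he 2
  have e4 := he 3
  have e5 := he 4
  rw [hnorm, hinner] at e1 e2 e3 e4 e5
  simp only [bp, WithLp.equiv_symm_apply, PiLp.toLp_apply, PiLp.sub_apply, Matrix.cons_val',
    Matrix.cons_val_zero, Matrix.cons_val_one, Matrix.head_cons, Matrix.cons_val_fin_one,
    Matrix.cons_val_two, Matrix.cons_val_three, Matrix.cons_val_four, Matrix.tail_cons, ← ht] at e1 e2 e3 e4 e5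
  set a : ℝ := c 0 * u 0 + c 1 * u 1 + c 2 * u 2 with ha
  have s1 : c 2 = a * u 2 := by
    have key : 4 * h * (c 2 - a * u 2) = 0 := by linear_combination e2 - e1
    have h4 : (4 : ℝ) * h ≠ 0 := by positivity
    have := (mul_eq_zero.mp key).resolve_left h4
    linarith
  have s2 : c 1 = a * u 1 + u 0 * u 1 / 2 := by
    have key : (-2 * t) * (c 1 - a * u 1 - u 0 * u 1 / 2) = 0 := by linear_combination e4 - e5
    have h2t : (-2 : ℝ) * t ≠ 0 := by
      intro hz; nlinarith
    have := (mul_eq_zero.mp key).resolve_left h2t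
    linarith
  have s3 : c 0 = a * u 0 - (u 0^2 - u 1^2)/4 := by
    linear_combination (e4 - e3)/3 + (t/3) * s2 - ((1 - u 1^2)/12) * t3
  have s4 : h^2 * (1 - u 2^2) = 1 - (u 0^2 + u 1^2)/2 := by
    linear_combination e1 - e3 + 2*h*s1 - 2*s3
  have hsq : h^2 < 1/2 := by
    have h1 : Real.sqrt 2 / 2 = Real.sqrt (1/2 : ℝ) := by
      rw [show (1/2 : ℝ) = 2⁻¹ by norm_num, Real.sqrt_inv]
      have h2 : Real.sqrt 2 * Real.sqrt 2 = 2 := Real.mul_self_sqrt (by norm_num)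
      field_simp
      norm_num
    rw [h1] at hh
    have := (Real.lt_sqrt h0.le).mp hh
    linarith
  clear he e1 e2 e3 e4 e5 s1 s2 s3 hinner hnorm
  nlinarith [sq_nonneg (u 2), sq_nonneg (u 0), sq_nonneg (u 1), sq_nonneg h,
    mul_nonneg (sq_nonneg (u 2)) (by positivity : (0:ℝ) ≤ h^2 + 1/2)]
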